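/- Wu's formula: let e_n = x_1 x_2 ⋯ x_n be the top elementary symmetric polynomial in F_q[x_1,…,x_n]. Then for all i with 0 ≤ i ≤ n, P^i(e_n) = e_n · e_i(x_1^{q−1}, …, x_n^{q−1}), where e_i denotes the i-th elementary symmetric polynomial. -/

import Mathlib

/-- The total Steenrod power `P(ξ) : F_q[V] → F_q[V][ξ]`, the `F_q`-algebra homomorphism
determined by `P(ξ)(x_i) = x_i + x_i^q ξ` on the variables (linear forms). -/
noncomputable def totalP (F : Type) [Field F] [Fintype F] (σ : Type) :
    MvPolynomial σ F →ₐ[F] Polynomial (MvPolynomial σ F) :=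
  MvPolynomial.aeval fun i =>
    Polynomial.C (MvPolynomial.X i) +
      Polynomial.C (MvPolynomial.X i ^ Fintype.card F) * Polynomial.X

/-- The Steenrod operation `P^i`, the `i`-th homogeneous component of the total
Steenrod power: `P(ξ)(f) = Σ_i P^i(f) ξ^i`. -/
noncomputable def Pop (F : Type) [Field F] [Fintype F] (σ : Type) (i : ℕ)
    (f : MvPolynomial σ F) : MvPolynomial σ F :=
  (totalP F σ f).coeff i

open MvPolynomial in
/-- Wu's formula: for `e_n = x_1 ⋯ x_n` and `0 ≤ i ≤ n`,
`P^i(e_n) = e_n · e_i(x_1^{q-1}, …, x_n^{q-1})`. -/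
theorem stmt9 (F : Type) [Field F] [Fintype F] (n i : ℕ) (hi : i ≤ n) :
    Pop F (Fin n) i (∏ j, X j) =
      (∏ j, X j) *
        aeval (fun j : Fin n => X j ^ (Fintype.card F - 1)) (esymm (Fin n) F i) := by
  classical
  set q := Fintype.card F with hqdef
  have hq : 1 ≤ q := Fintype.card_pos
  unfold Pop totalP
  rw [map_prod]
  simp only [MvPolynomial.aeval_X]
  have hcomm : ∀ j : Fin n, Polynomial.C (X j : MvPolynomial (Fin n) F) +
      Polynomial.C (X j ^ q) * Polynomial.X
      = Polynomial.C (X j ^ q) * Polynomial.X + Polynomial.C (X j) := fun j => add_comm _ _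
  simp only [← hqdef, hcomm]
  rw [Finset.prod_add, Polynomial.finset_sum_coeff]
  have hterm : ∀ t : Finset (Fin n),
      ((∏ j ∈ t, Polynomial.C ((X j : MvPolynomial (Fin n) F) ^ q) * Polynomial.X) *
        ∏ j ∈ Finset.univ \ t, Polynomial.C (X j)).coeff i
      = if t.card = i then (∏ j ∈ t, X j ^ q) * ∏ j ∈ Finset.univ \ t, X j else 0 := by
    intro t
    have hC : ∀ s : Finset (Fin n), ∀ f : Fin n → MvPolynomial (Fin n) F,
        (∏ j ∈ s, Polynomial.C (f j)) = Polynomial.C (∏ j ∈ s, f j) :=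
      fun s f => (map_prod (Polynomial.C : MvPolynomial (Fin n) F →+* _) f s).symm
    rw [Finset.prod_mul_distrib, Finset.prod_const, hC, hC]
    rw [mul_right_comm, ← Polynomial.C_mul, Polynomial.coeff_C_mul, Polynomial.coeff_X_pow]
    split <;> rename_i h <;> simp [eq_comm, h]
  simp only [hterm]
  rw [← Finset.sum_filter, ← Finset.powersetCard_eq_filter, esymm, map_sum, Finset.mul_sum]
  refine Finset.sum_congr rfl fun t ht => ?_
  rw [Finset.mem_powersetCard] at ht
  rw [map_prod]
  simp only [aeval_X]
  have hpow : ∀ j : Fin n, (X j : MvPolynomial (Fin n) F) ^ q = X j ^ (q - 1) * X j := by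
    intro j; rw [← pow_succ, Nat.sub_add_cancel hq]
  rw [Finset.prod_congr rfl (fun j _ => hpow j), Finset.prod_mul_distrib, mul_assoc,
    ← Finset.compl_eq_univ_sdiff, Finset.prod_mul_prod_compl, mul_comm]
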